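/- Let N(G,X,δ) be an instance of the Network Coding problem with m ≥ 1 edges and k ≥ 1 messages, and let I_N(Y,R) be the index coding instance obtained from N by the reduction. Then μ(I_N) = m, where μ(I_N) is the maximum, over side-information sets H, of the number of distinct messages demanded by clients of I_N whose side-information set equals H. -/

import Mathlib

/-- `mu R` is the maximum, over side-information sets `H`, of the number of distinct
messages demanded by clients of `R` whose side-information set equals `H`. -/
def mu {ι : Type} [DecidableEq ι] (R : Finset (ι × Finset ι)) : ℕ :=
  (R.image Prod.snd).sup fun H => ((R.filter fun r => r.2 = H).image Prod.fst).card

/-- `f` is an index code of block length `n` and length `ℓ` for the instance with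
clients `R`: every client `(i, H) ∈ R` can decode message `i` from the broadcast
`f X` together with the messages indexed by `H`. -/
def IsIndexCode {ι A : Type} (R : Finset (ι × Finset ι)) (n ℓ : ℕ)
    (f : (ι → Fin n → A) → Fin ℓ → A) : Prop :=
  ∀ r ∈ R, ∀ X X' : ι → Fin n → A,
    f X = f X' → (∀ j ∈ r.2, X j = X' j) → X r.1 = X' r.1

/-- An instance of the Network Coding problem with `m` edges (indexed by `Fin m`),
`k` messages, and `d` output edges.  The input edges `S = {e_0, …, e_{k-1}}` are the
edges with index `< k`, and the output edges `D` are the edges with index `≥ m - d`.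
`P e` is the set of parent edges of `e`.  Input edges have no parents (their tail has
in-degree `0`), non-input edges have a parent, output edges have no children (their
head has out-degree `0`); `ord` witnesses acyclicity.  The demand function `δ` is
onto when restricted to output edges. -/
structure NetworkInstance (m k d : ℕ) where
  hkd : k + d ≤ m
  P : Fin m → Finset (Fin m)
  input_no_parent : ∀ e : Fin m, (e : ℕ) < k → P e = ∅
  noninput_has_parent : ∀ e : Fin m, k ≤ (e : ℕ) → P e ≠ ∅
  output_no_child : ∀ e e' : Fin m, e' ∈ P e → (e' : ℕ) < m - d
  ord : Fin m → ℕ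
  acyclic : ∀ e e' : Fin m, e' ∈ P e → ord e' < ord e
  δ : Fin m → Fin k
  δ_surj : ∀ i : Fin k, ∃ e : Fin m, m - d ≤ (e : ℕ) ∧ δ e = i

namespace NetworkInstance

variable {m k d : ℕ}

theorem k_le_m (N : NetworkInstance m k d) : k ≤ m :=
  le_trans (Nat.le_add_right k d) N.hkd

/-- `f` is an `(n, q)` network code for `N` over the alphabet `A` (with `|A| = q`):
`f e` is the global encoding function of edge `e`, satisfying
(N1) on input edges it outputs the corresponding message,
(N2) on output edges it outputs the demanded message,
(N3) on non-input edges it factors through the parents' encoding functions. -/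
def IsNetworkCode (N : NetworkInstance m k d) {A : Type} (n : ℕ)
    (f : Fin m → (Fin k → Fin n → A) → Fin n → A) : Prop :=
  (∀ (e : Fin m) (h : (e : ℕ) < k) (X : Fin k → Fin n → A), f e X = X ⟨(e : ℕ), h⟩) ∧
  (∀ e : Fin m, m - d ≤ (e : ℕ) → ∀ X : Fin k → Fin n → A, f e X = X (N.δ e)) ∧
  (∀ e : Fin m, k ≤ (e : ℕ) →
    ∃ φ : ({p : Fin m // p ∈ N.P e} → Fin n → A) → Fin n → A,
      ∀ X : Fin k → Fin n → A, f e X = φ fun p => f p.1 X)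

/-- A linear `(n, q)` network code over the field `F` (with `|F| = q`): a network code
all of whose global and local encoding functions are `F`-linear. -/
def IsLinearNetworkCode (N : NetworkInstance m k d) (F : Type) [Field F] (n : ℕ)
    (f : Fin m → (Fin k → Fin n → F) → Fin n → F) : Prop :=
  N.IsNetworkCode n f ∧ (∀ e : Fin m, IsLinearMap F (f e)) ∧
  (∀ e : Fin m, k ≤ (e : ℕ) →
    ∃ φ : ({p : Fin m // p ∈ N.P e} → Fin n → F) → Fin n → F,
      IsLinearMap F φ ∧ ∀ X : Fin k → Fin n → F, f e X = φ fun p => f p.1 X)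

end NetworkInstance

namespace NetworkInstance

variable {m k d : ℕ}

/-- The reduction from the Network Coding problem to the Index Coding problem.
The index coding instance `I_N` has message set `Y = {y_e : e ∈ E} ∪ {x_1, …, x_k}`
(indexed by `Fin k ⊕ Fin m`, where `Sum.inl i` is the message `x_i` and `Sum.inr e`
is the message `y_e`), and client set `R = R1 ∪ R2 ∪ R3 ∪ R4 ∪ R5` where
`R1 = {(x_i, {y_i}) : e_i ∈ S}`, `R2 = {(y_i, {x_i}) : e_i ∈ S}`,
`R3 = {(y_i, {y_j : e_j ∈ P(e_i)}) : e_i ∈ E \ S}`,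
`R4 = {(δ(e_i), {y_i}) : e_i ∈ D}`, and `R5 = {(y_i, X) : e_i ∈ E}`. -/
def reduction (N : NetworkInstance m k d) :
    Finset ((Fin k ⊕ Fin m) × Finset (Fin k ⊕ Fin m)) :=
  ((Finset.univ : Finset (Fin k)).image fun i =>
      (Sum.inl i, ({Sum.inr (Fin.castLE N.k_le_m i)} : Finset (Fin k ⊕ Fin m)))) ∪
  ((Finset.univ : Finset (Fin k)).image fun i =>
      (Sum.inr (Fin.castLE N.k_le_m i), ({Sum.inl i} : Finset (Fin k ⊕ Fin m)))) ∪
  ((Finset.univ.filter fun e : Fin m => k ≤ (e : ℕ)).image fun e =>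
      (Sum.inr e, (N.P e).image Sum.inr)) ∪
  ((Finset.univ.filter fun e : Fin m => m - d ≤ (e : ℕ)).image fun e =>
      (Sum.inl (N.δ e), ({Sum.inr e} : Finset (Fin k ⊕ Fin m)))) ∪
  ((Finset.univ : Finset (Fin m)).image fun e =>
      (Sum.inr e, (Finset.univ : Finset (Fin k)).image Sum.inl))

end NetworkInstance

lemma mem_reduction_iff {m k d : ℕ} (N : NetworkInstance m k d)
    (r : (Fin k ⊕ Fin m) × Finset (Fin k ⊕ Fin m)) :
    r ∈ N.reduction ↔
      (∃ i : Fin k, r = (Sum.inl i, {Sum.inr (Fin.castLE N.k_le_m i)})) ∨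
      (∃ i : Fin k, r = (Sum.inr (Fin.castLE N.k_le_m i), {Sum.inl i})) ∨
      (∃ e : Fin m, k ≤ (e : ℕ) ∧ r = (Sum.inr e, (N.P e).image Sum.inr)) ∨
      (∃ e : Fin m, m - d ≤ (e : ℕ) ∧ r = (Sum.inl (N.δ e), {Sum.inr e})) ∨
      (∃ e : Fin m, r = (Sum.inr e, (Finset.univ : Finset (Fin k)).image Sum.inl)) := by
  simp [NetworkInstance.reduction, eq_comm, and_comm]

theorem mu_reduction_eq_m {m k d : ℕ} (hm : 1 ≤ m) (hk : 1 ≤ k)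
    (N : NetworkInstance m k d) :
    mu N.reduction = m := by
  have hkm : k ≤ m := N.k_le_m
  have hkd' : k ≤ m - d := Nat.le_sub_of_add_le N.hkd
  apply le_antisymm
  · apply Finset.sup_le
    intro H hH
    set T := (N.reduction.filter fun r => r.2 = H).image Prod.fst with hT
    by_cases hinl : ∃ i : Fin k, Sum.inl i ∈ H
    · obtain ⟨i0, hi0⟩ := hinl
      calc T.card ≤ ((Finset.univ : Finset (Fin m)).image Sum.inr).card := by
            apply Finset.card_le_card
            intro a ha
            simp only [hT, Finset.mem_image, Finset.mem_filter] at ha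
            obtain ⟨r, ⟨hrR, hrH⟩, rfl⟩ := ha
            rw [mem_reduction_iff] at hrR
            rcases hrR with ⟨i', rfl⟩ | ⟨i', rfl⟩ | ⟨e, he, rfl⟩ | ⟨e, he, rfl⟩ | ⟨e, rfl⟩
            · rw [← hrH] at hi0; simp at hi0
            · simp
            · simp
            · rw [← hrH] at hi0; simp at hi0
            · simp
        _ = m := by
            rw [Finset.card_image_of_injective _ Sum.inr_injective]; simp
    · have hcard : (T.filter fun a => a.isLeft).card
          + (T.filter fun a => ¬ a.isLeft).card = T.card :=
        Finset.card_filter_add_card_filter_not _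
      have hL : (T.filter fun a => a.isLeft).card ≤ 1 := by
        apply Finset.card_le_one.mpr
        have key : ∀ a ∈ T.filter fun a => a.isLeft, ∃ e : Fin m,
            H = {Sum.inr e} ∧ ((∃ h : (e : ℕ) < k, a = Sum.inl ⟨e, h⟩) ∨
              (m - d ≤ (e : ℕ) ∧ a = Sum.inl (N.δ e))) := by
          intro a ha
          simp only [hT, Finset.mem_filter, Finset.mem_image] at ha
          obtain ⟨⟨r, ⟨hrR, hrH⟩, rfl⟩, hleft⟩ := ha
          rw [mem_reduction_iff] at hrR
          rcases hrR with ⟨i', rfl⟩ | ⟨i', rfl⟩ | ⟨e, he, rfl⟩ | ⟨e, he, rfl⟩ | ⟨e, rfl⟩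
          · exact ⟨Fin.castLE N.k_le_m i', hrH.symm, Or.inl ⟨i'.2, rfl⟩⟩
          · simp at hleft
          · simp at hleft
          · exact ⟨e, hrH.symm, Or.inr ⟨he, rfl⟩⟩
          · simp at hleft
        intro a ha b hb
        obtain ⟨e, hHe, hae⟩ := key a ha
        obtain ⟨e', hHe', hbe⟩ := key b hb
        have hee : e = e' := by
          rw [hHe] at hHe'
          exact Sum.inr_injective (Finset.singleton_injective hHe')
        subst hee
        rcases hae with ⟨h1, rfl⟩ | ⟨h1, rfl⟩ <;> rcases hbe with ⟨h2, rfl⟩ | ⟨h2, rfl⟩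
        · rfl
        · omega
        · omega
        · rfl
      have hR : (T.filter fun a => ¬ a.isLeft).card ≤ m - 1 := by
        calc (T.filter fun a => ¬ a.isLeft).card
            ≤ ((Finset.univ.erase (⟨0, hm⟩ : Fin m)).image Sum.inr).card := by
              apply Finset.card_le_card
              intro a ha
              simp only [hT, Finset.mem_filter, Finset.mem_image] at ha
              obtain ⟨⟨r, ⟨hrR, hrH⟩, rfl⟩, hright⟩ := ha
              rw [mem_reduction_iff] at hrR
              rcases hrR with ⟨i', rfl⟩ | ⟨i', rfl⟩ | ⟨e, he, rfl⟩ | ⟨e, he, rfl⟩ | ⟨e, rfl⟩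
              · simp at hright
              · exact absurd ⟨i', by rw [← hrH]; simp⟩ hinl
              · have : e ≠ ⟨0, hm⟩ := by
                  intro h; rw [h] at he; simp at he; omega
                simp [this]
              · simp at hright
              · exact absurd ⟨⟨0, hk⟩, by rw [← hrH]; simp⟩ hinl
          _ = m - 1 := by
              rw [Finset.card_image_of_injective _ Sum.inr_injective,
                Finset.card_erase_of_mem (Finset.mem_univ _)]
              simp
      omega
  · have hH0 : ((Finset.univ : Finset (Fin k)).image Sum.inl :
        Finset (Fin k ⊕ Fin m)) ∈ N.reduction.image Prod.snd := by
      apply Finset.mem_image.mpr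
      refine ⟨(Sum.inr ⟨0, hm⟩, _), ?_, rfl⟩
      rw [mem_reduction_iff]
      exact Or.inr (Or.inr (Or.inr (Or.inr ⟨⟨0, hm⟩, rfl⟩)))
    refine le_trans ?_ (Finset.le_sup hH0)
    have hsub : (Finset.univ : Finset (Fin m)).image Sum.inr ⊆
        (N.reduction.filter fun r =>
          r.2 = (Finset.univ : Finset (Fin k)).image Sum.inl).image Prod.fst := by
      intro a ha
      simp only [Finset.mem_image, Finset.mem_univ, true_and] at ha
      obtain ⟨e, rfl⟩ := ha
      refine Finset.mem_image.mpr ⟨(Sum.inr e, _), Finset.mem_filter.mpr ⟨?_, rfl⟩, rfl⟩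
      rw [mem_reduction_iff]
      exact Or.inr (Or.inr (Or.inr (Or.inr ⟨e, rfl⟩)))
    calc m = ((Finset.univ : Finset (Fin m)).image Sum.inr).card := by
          rw [Finset.card_image_of_injective _ Sum.inr_injective]; simp
      _ ≤ _ := Finset.card_le_card hsub
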